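/- arXiv:1501.02407 — 2 statements merged into one kernel-verified Lean document; each statement's English description precedes it below -/
import Mathlib

section
/- For n >= 0 and angles theta, mu in [0, pi], the product formula L_n(cos theta) L_n(cos mu) = (1/pi) * integral from 0 to pi of L_n(cos theta * cos mu + sin theta * sin mu * cos s) ds holds. -/
open Real

/-- The Legendre polynomials, defined by Bonnet's recursion. -/
noncomputable def legendre : ℕ → ℝ → ℝ
  | 0 => fun _ => 1
  | 1 => fun x => x
  | (n+2) => fun x =>
      (((2*n+3) : ℝ) * x * legendre (n+1) x - ((n+1) : ℝ) * legendre n x) / ((n+2) : ℝ)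

noncomputable def legendreD : ℕ → ℝ → ℝ
  | 0 => fun _ => 0
  | (n+1) => fun x => x * legendreD n x + ((n:ℝ)+1) * legendre n x

lemma legendre_zero (x : ℝ) : legendre 0 x = 1 := rfl
lemma legendre_one (x : ℝ) : legendre 1 x = x := rfl
lemma legendreD_zero (x : ℝ) : legendreD 0 x = 0 := rfl
lemma legendreD_succ (n : ℕ) (x : ℝ) :
    legendreD (n+1) x = x * legendreD n x + ((n:ℝ)+1) * legendre n x := rfl

lemma legendre_bonnet (n : ℕ) (x : ℝ) :
    ((n:ℝ)+2) * legendre (n+2) x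
      = (2*(n:ℝ)+3) * x * legendre (n+1) x - ((n:ℝ)+1) * legendre n x := by
  show ((n:ℝ)+2) * ((((2*n+3) : ℝ) * x * legendre (n+1) x - ((n+1) : ℝ) * legendre n x) / ((n+2) : ℝ)) = _
  have h : ((n:ℝ)+2) ≠ 0 := by positivity
  push_cast
  field_simp

lemma legD2 (n : ℕ) (x : ℝ) :
    x * legendreD (n+1) x = legendreD n x + ((n:ℝ)+1) * legendre (n+1) x := by
  induction n with
  | zero => simp [legendreD, legendre]
  | succ n ih =>
      rw [legendreD_succ (n+1) x]
      have hb := legendre_bonnet n x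
      have hd := legendreD_succ n x
      push_cast
      push_cast at ih hb hd
      linear_combination x*ih - hd - hb

lemma legendreD_two_step (n : ℕ) (t : ℝ) :
    legendreD (n+2) t = legendreD n t + (2*(n:ℝ)+3) * legendre (n+1) t := by
  have h1 := legendreD_succ (n+1) t
  have h2 := legD2 n t
  push_cast at h1
  linear_combination h1 + h2

lemma legendre_hasDerivAt (n : ℕ) (x : ℝ) :
    HasDerivAt (legendre n) (legendreD n x) x := by
  induction n using Nat.twoStepInduction generalizing x with
  | zero => simpa [legendre, legendreD] using hasDerivAt_const x (1:ℝ)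
  | one => simpa [legendre, legendreD] using hasDerivAt_id' x
  | more n ih1 ih2 =>
      have h : HasDerivAt (legendre (n+2))
          (((2*(n:ℝ)+3) * (1 * legendre (n+1) x + x * legendreD (n+1) x)
            - ((n:ℝ)+1) * legendreD n x) / ((n:ℝ)+2)) x := by
        show HasDerivAt (fun x => (((2*n+3) : ℝ) * x * legendre (n+1) x
            - ((n+1) : ℝ) * legendre n x) / ((n+2) : ℝ)) _ x
        have hmul : HasDerivAt (fun x : ℝ => ((2*n+3) : ℝ) * x * legendre (n+1) x)
            (((2*(n:ℝ)+3)) * (1 * legendre (n+1) x + x * legendreD (n+1) x)) x := by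
          have h' := ((hasDerivAt_id x).fun_mul (ih2 x)).const_mul (((2*n+3)) : ℝ)
          convert (show HasDerivAt (_ : ℝ → ℝ) _ x from h') using 1
          · funext y; simp only [id_eq]; push_cast; ring
          · rfl
        have hsub := hmul.fun_sub ((ih1 x).const_mul (((n+1)) : ℝ))
        have := hsub.div_const (((n+2)) : ℝ)
        convert (show HasDerivAt (_ : ℝ → ℝ) _ x from this) using 1 <;> push_cast <;> ring
      convert h using 1
      have h2 := legD2 n x
      have hd2 := legendreD_succ (n+1) x
      have hd1 := legendreD_succ n x
      push_cast at hd2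
      field_simp
      linear_combination (((n:ℝ)+2)) * hd2 - ((n:ℝ)+1)*h2

lemma legendre_continuous (n : ℕ) : Continuous (legendre n) :=
  continuous_iff_continuousAt.2 fun x => (legendre_hasDerivAt n x).continuousAt

lemma legendreD_continuous (n : ℕ) : Continuous (legendreD n) := by
  induction n with
  | zero => exact continuous_const
  | succ n ih =>
      show Continuous (fun x => x * legendreD n x + ((n:ℝ)+1) * legendre n x)
      exact ((continuous_id.mul ih).add (continuous_const.mul (legendre_continuous n)))

noncomputable def legS : ℕ → ℝ → ℝ → ℝ
  | 0 => fun _ _ => 0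
  | 1 => fun _ _ => 1
  | (n+2) => fun x y => legS n x y + (2*(n:ℝ)+3) * legendre (n+1) x * legendre (n+1) y

lemma legS_identity (n : ℕ) (x y : ℝ) :
    (x^2+y^2) * legS (n+1) x y - 2*x*y*legS n x y
      = ((n:ℝ)+1) * (x * legendre (n+1) x * legendre n y + y * legendre n x * legendre (n+1) y) := by
  induction n using Nat.twoStepInduction generalizing x y with
  | zero => simp [legS, legendre]; ring
  | one =>
      norm_num [legS, legendre]
      ring
  | more n ih _ =>
      have e2 : legS (n+1+2) x y = legS (n+1) x y + (2*((n:ℝ)+1)+3) * legendre (n+2) x * legendre (n+2) y := by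
        show legS ((n+1)+2) x y = _
        simp only [legS]; push_cast; ring
      have e1 : legS (n+2) x y = legS n x y + (2*(n:ℝ)+3) * legendre (n+1) x * legendre (n+1) y := by
        simp [legS]
      have hbx := legendre_bonnet (n+1) x
      have hby := legendre_bonnet (n+1) y
      have hbx' := legendre_bonnet n x
      have hby' := legendre_bonnet n y
      push_cast at hbx hby hbx' hby' e2 ih ⊢
      linear_combination (x^2+y^2)*e2 - (2*x*y)*e1 + ih x y
        - (x*legendre (n+2) y) * hbx - (y*legendre (n+2) x) * hby
        + (x*legendre (n+1) x) * hby' + (y*legendre (n+1) y) * hbx'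

lemma contZ (a c : ℝ) : Continuous fun s : ℝ => a + c * Real.cos s :=
  continuous_const.add (continuous_const.mul Real.continuous_cos)

lemma byparts (a c : ℝ) (m : ℕ) :
    ∫ s in (0:ℝ)..π, Real.cos s * legendre m (a + c * Real.cos s)
      = ∫ s in (0:ℝ)..π, c * (Real.sin s * Real.sin s * legendreD m (a + c * Real.cos s)) := by
  have hzc := contZ a c
  have hcont1 : Continuous fun s : ℝ => Real.cos s * legendre m (a + c * Real.cos s) :=
    Real.continuous_cos.mul ((legendre_continuous m).comp hzc)
  have hcont2 : Continuous fun s : ℝ =>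
      c * (Real.sin s * Real.sin s * legendreD m (a + c * Real.cos s)) :=
    continuous_const.mul ((Real.continuous_sin.mul Real.continuous_sin).mul
      ((legendreD_continuous m).comp hzc))
  have hF : ∀ s : ℝ, HasDerivAt (fun s => Real.sin s * legendre m (a + c * Real.cos s))
      (Real.cos s * legendre m (a + c * Real.cos s)
        - c * (Real.sin s * Real.sin s * legendreD m (a + c * Real.cos s))) s := by
    intro s
    have hz : HasDerivAt (fun s : ℝ => a + c * Real.cos s) (c * (-Real.sin s)) s :=
      ((Real.hasDerivAt_cos s).const_mul c).const_add a
    have hg := (legendre_hasDerivAt m (a + c * Real.cos s)).comp s hz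
    have := (Real.hasDerivAt_sin s).fun_mul hg
    simp only [Function.comp] at this
    convert (show HasDerivAt (_ : ℝ → ℝ) _ s from this) using 1
    ring
  have h0 : ∫ s in (0:ℝ)..π, (Real.cos s * legendre m (a + c * Real.cos s)
      - c * (Real.sin s * Real.sin s * legendreD m (a + c * Real.cos s)))
      = Real.sin π * legendre m (a + c * Real.cos π)
        - Real.sin 0 * legendre m (a + c * Real.cos 0) := by
    exact intervalIntegral.integral_eq_sub_of_hasDerivAt (fun s _ => hF s)
      ((hcont1.sub hcont2).intervalIntegrable 0 π)
  rw [intervalIntegral.integral_sub (hcont1.intervalIntegrable 0 π)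
    (hcont2.intervalIntegrable 0 π)] at h0
  simp only [Real.sin_pi, Real.sin_zero, zero_mul, sub_zero, sub_self] at h0
  linarith [h0]

lemma legendre_main (x y c : ℝ) (hc : c^2 = (1-x^2)*(1-y^2)) (n : ℕ) :
    ((∫ s in (0:ℝ)..π, legendre n (x*y + c * Real.cos s))
        = π * (legendre n x * legendre n y)) ∧
    ((∫ s in (0:ℝ)..π, legendreD n (x*y + c * Real.cos s))
        = π * legS n x y) := by
  induction n using Nat.twoStepInduction with
  | zero =>
      constructor
      · simp [legendre, legS]
      · simp [legendreD, legS]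
  | one =>
      have hczero : (∫ s in (0:ℝ)..π, c * Real.cos s) = 0 := by
        rw [intervalIntegral.integral_const_mul]
        simp [integral_cos]
      constructor
      · show (∫ s in (0:ℝ)..π, (x*y + c * Real.cos s)) = π * (x * y)
        rw [intervalIntegral.integral_add (intervalIntegrable_const)
          ((continuous_const.fun_mul Real.continuous_cos).intervalIntegrable 0 π), hczero]
        simp
        ring
      · have : ∀ s : ℝ, legendreD 1 (x*y + c * Real.cos s) = 1 := by
          intro s; simp [legendreD, legendre]
        rw [intervalIntegral.integral_congr (fun s _ => this s)]
        simp [legS]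
  | more n ih1 ih2 =>
      obtain ⟨ihI0, ihE0⟩ := ih1
      obtain ⟨ihI1, ihE1⟩ := ih2
      have hzc := contZ (x*y) c
      have cP : ∀ m : ℕ, Continuous fun s : ℝ => legendre m (x*y + c * Real.cos s) :=
        fun m => (legendre_continuous m).comp hzc
      have cD : ∀ m : ℕ, Continuous fun s : ℝ => legendreD m (x*y + c * Real.cos s) :=
        fun m => (legendreD_continuous m).comp hzc
      have cB : Continuous fun s : ℝ => Real.cos s * legendre (n+1) (x*y + c * Real.cos s) :=
        Real.continuous_cos.mul (cP (n+1))
      have cA : Continuous fun s : ℝ =>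
          c * (Real.sin s * Real.sin s * legendreD (n+1) (x*y + c * Real.cos s)) :=
        continuous_const.mul ((Real.continuous_sin.mul Real.continuous_sin).mul (cD (n+1)))
      -- part 2 first : the D-integral
      have hE2 : (∫ s in (0:ℝ)..π, legendreD (n+2) (x*y + c * Real.cos s))
          = π * legS (n+2) x y := by
        have hpt : ∀ s : ℝ, legendreD (n+2) (x*y + c * Real.cos s)
            = legendreD n (x*y + c * Real.cos s)
              + (2*(n:ℝ)+3) * legendre (n+1) (x*y + c * Real.cos s) :=
          fun s => legendreD_two_step n _
        rw [intervalIntegral.integral_congr (fun s _ => hpt s),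
          intervalIntegral.integral_add ((cD n).intervalIntegrable 0 π)
            ((continuous_const.fun_mul (cP (n+1))).intervalIntegrable 0 π),
          intervalIntegral.integral_const_mul, ihE0, ihI1]
        show _ = π * (legS n x y + (2*(n:ℝ)+3) * legendre (n+1) x * legendre (n+1) y)
        ring
      refine ⟨?_, hE2⟩
      -- the key computation
      have hbp := byparts (x*y) c (n+1)
      have key : ((n:ℝ)+2) * (c * ∫ s in (0:ℝ)..π,
            Real.cos s * legendre (n+1) (x*y + c * Real.cos s))
          = π * (((n:ℝ)+1) * (legendre n x * legendre n y
              + x*y*(legendre (n+1) x * legendre (n+1) y)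
              - x * legendre (n+1) x * legendre n y
              - y * legendre n x * legendre (n+1) y)) := by
        have hpt : ∀ s : ℝ,
            c * (c * (Real.sin s * Real.sin s * legendreD (n+1) (x*y + c * Real.cos s)))
              + ((n:ℝ)+1) * (c * (Real.cos s * legendre (n+1) (x*y + c * Real.cos s)))
            = ((n:ℝ)+1) * legendre n (x*y + c * Real.cos s)
              + (((n:ℝ)+1)*(x*y)) * legendre (n+1) (x*y + c * Real.cos s)
              + (2*(x*y)) * legendreD n (x*y + c * Real.cos s)
              - (x^2+y^2) * legendreD (n+1) (x*y + c * Real.cos s) := by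
          intro s
          set t := x*y + c * Real.cos s with ht
          have h1 := legendreD_succ n t
          have h2 := legD2 n t
          have hss := Real.sin_sq s
          have hsint : c^2 * (Real.sin s)^2 = 1 - x^2 - y^2 - t^2 + 2*(x*y)*t := by
            rw [ht]; linear_combination c^2 * hss + hc
          linear_combination (legendreD (n+1) t) * hsint + h1 + (2*(x*y) - t)*h2
        have hsplit : (∫ s in (0:ℝ)..π,
              (c * (c * (Real.sin s * Real.sin s * legendreD (n+1) (x*y + c * Real.cos s)))
              + ((n:ℝ)+1) * (c * (Real.cos s * legendre (n+1) (x*y + c * Real.cos s)))))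
            = c * (∫ s in (0:ℝ)..π,
                c * (Real.sin s * Real.sin s * legendreD (n+1) (x*y + c * Real.cos s)))
              + ((n:ℝ)+1) * (c * ∫ s in (0:ℝ)..π,
                Real.cos s * legendre (n+1) (x*y + c * Real.cos s)) := by
          rw [intervalIntegral.integral_add ((continuous_const.fun_mul cA).intervalIntegrable 0 π)
            ((continuous_const.fun_mul (continuous_const.fun_mul cB)).intervalIntegrable 0 π),
            intervalIntegral.integral_const_mul, intervalIntegral.integral_const_mul,
            intervalIntegral.integral_const_mul, intervalIntegral.integral_const_mul]
        have hsplit2 : (∫ s in (0:ℝ)..π,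
              (((n:ℝ)+1) * legendre n (x*y + c * Real.cos s)
              + (((n:ℝ)+1)*(x*y)) * legendre (n+1) (x*y + c * Real.cos s)
              + (2*(x*y)) * legendreD n (x*y + c * Real.cos s)
              - (x^2+y^2) * legendreD (n+1) (x*y + c * Real.cos s)))
            = ((n:ℝ)+1) * (π * (legendre n x * legendre n y))
              + (((n:ℝ)+1)*(x*y)) * (π * (legendre (n+1) x * legendre (n+1) y))
              + (2*(x*y)) * (π * legS n x y)
              - (x^2+y^2) * (π * legS (n+1) x y) := by
          rw [intervalIntegral.integral_sub, intervalIntegral.integral_add,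
            intervalIntegral.integral_add, intervalIntegral.integral_const_mul,
            intervalIntegral.integral_const_mul, intervalIntegral.integral_const_mul,
            intervalIntegral.integral_const_mul, ihI0, ihI1, ihE0, ihE1]
          · exact (continuous_const.mul (cP n)).intervalIntegrable 0 π
          · exact (continuous_const.mul (cP (n+1))).intervalIntegrable 0 π
          · exact ((continuous_const.mul (cP n)).add
              (continuous_const.mul (cP (n+1)))).intervalIntegrable 0 π
          · exact (continuous_const.mul (cD n)).intervalIntegrable 0 π
          · exact (((continuous_const.mul (cP n)).add
              (continuous_const.mul (cP (n+1)))).add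
              (continuous_const.mul (cD n))).intervalIntegrable 0 π
          · exact (continuous_const.mul (cD (n+1))).intervalIntegrable 0 π
        have hcongr : (∫ s in (0:ℝ)..π,
              (c * (c * (Real.sin s * Real.sin s * legendreD (n+1) (x*y + c * Real.cos s)))
              + ((n:ℝ)+1) * (c * (Real.cos s * legendre (n+1) (x*y + c * Real.cos s)))))
            = ∫ s in (0:ℝ)..π,
              (((n:ℝ)+1) * legendre n (x*y + c * Real.cos s)
              + (((n:ℝ)+1)*(x*y)) * legendre (n+1) (x*y + c * Real.cos s)
              + (2*(x*y)) * legendreD n (x*y + c * Real.cos s)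
              - (x^2+y^2) * legendreD (n+1) (x*y + c * Real.cos s)) :=
          intervalIntegral.integral_congr (fun s _ => hpt s)
        have hid := legS_identity n x y
        rw [hsplit] at hcongr
        rw [hsplit2] at hcongr
        rw [← hbp] at hcongr
        linear_combination hcongr - π * hid
      -- now conclude part 1
      have hbonnet_pt : ∀ s : ℝ, ((n:ℝ)+2) * legendre (n+2) (x*y + c * Real.cos s)
          = ((2*(n:ℝ)+3)*(x*y)) * legendre (n+1) (x*y + c * Real.cos s)
            + ((2*(n:ℝ)+3)*c) * (Real.cos s * legendre (n+1) (x*y + c * Real.cos s))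
            - ((n:ℝ)+1) * legendre n (x*y + c * Real.cos s) := by
        intro s
        have hb := legendre_bonnet n (x*y + c * Real.cos s)
        linear_combination hb
      have hI2split : ((n:ℝ)+2) * (∫ s in (0:ℝ)..π, legendre (n+2) (x*y + c * Real.cos s))
          = ((2*(n:ℝ)+3)*(x*y)) * (π * (legendre (n+1) x * legendre (n+1) y))
            + ((2*(n:ℝ)+3)*c) * (∫ s in (0:ℝ)..π,
                Real.cos s * legendre (n+1) (x*y + c * Real.cos s))
            - ((n:ℝ)+1) * (π * (legendre n x * legendre n y)) := by
        rw [← intervalIntegral.integral_const_mul,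
          intervalIntegral.integral_congr (fun s _ => hbonnet_pt s),
          intervalIntegral.integral_sub, intervalIntegral.integral_add,
          intervalIntegral.integral_const_mul, intervalIntegral.integral_const_mul,
          intervalIntegral.integral_const_mul, ihI0, ihI1]
        · exact (continuous_const.mul (cP (n+1))).intervalIntegrable 0 π
        · exact (continuous_const.mul cB).intervalIntegrable 0 π
        · exact ((continuous_const.mul (cP (n+1))).add
            (continuous_const.mul cB)).intervalIntegrable 0 π
        · exact (continuous_const.mul (cP n)).intervalIntegrable 0 π
      have hBx := legendre_bonnet n x
      have hBy := legendre_bonnet n y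
      have hfin : ((n:ℝ)+2)^2 * (∫ s in (0:ℝ)..π, legendre (n+2) (x*y + c * Real.cos s))
          = ((n:ℝ)+2)^2 * (π * (legendre (n+2) x * legendre (n+2) y)) := by
        linear_combination ((n:ℝ)+2) * hI2split + (2*(n:ℝ)+3) * key
          - π * (((n:ℝ)+2) * legendre (n+2) y) * hBx
          - π * ((2*(n:ℝ)+3)*x*legendre (n+1) x - ((n:ℝ)+1)*legendre n x) * hBy
      have h2 : ((n:ℝ)+2)^2 ≠ 0 := by positivity
      exact mul_left_cancel₀ h2 hfin

theorem legendre_product_formula (n : ℕ) (θ μ : ℝ)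
    (hθ : θ ∈ Set.Icc 0 π) (hμ : μ ∈ Set.Icc 0 π) :
    legendre n (Real.cos θ) * legendre n (Real.cos μ)
      = (1/π) * ∫ s in (0:ℝ)..π,
          legendre n (Real.cos θ * Real.cos μ + Real.sin θ * Real.sin μ * Real.cos s) := by
  have hc : (Real.sin θ * Real.sin μ)^2
      = (1 - (Real.cos θ)^2) * (1 - (Real.cos μ)^2) := by
    rw [mul_pow, Real.sin_sq, Real.sin_sq]
  have h := (legendre_main (Real.cos θ) (Real.cos μ) (Real.sin θ * Real.sin μ) hc n).1
  rw [h]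
  rw [one_div, inv_mul_cancel_left₀ Real.pi_ne_zero]
end

section
/- Let f be 2*pi-periodic, continuous on the closed strip {z : |Im z| <= alpha'} for every alpha' < alpha, analytic on the open strip {z : |Im z| < alpha}, and bounded by M there. Then for every positive integer N, |integral from 0 to 2*pi of f(t) dt - (2*pi/N) * sum_{k=1}^{N} f(2*pi*k/N)| <= 4*pi*M/(e^{alpha*N} - 1). -/
open Real Complex MeasureTheory intervalIntegral

private lemma trap_contour_shift (f : ℂ → ℂ) (α : ℝ)
    (hper : ∀ z : ℂ, f (z + 2*π) = f z)
    (hanal : DifferentiableOn ℂ f {z : ℂ | |z.im| < α})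
    (n : ℤ) (β : ℝ) (hβ : |β| < α) :
    (∫ x in (0:ℝ)..(2*π), Complex.exp (-(n:ℂ) * I * x) * f x)
      = ∫ x in (0:ℝ)..(2*π), Complex.exp (-(n:ℂ) * I * (x + β*I)) * f (x + β*I) := by
  set F : ℂ → ℂ := fun z => Complex.exp (-(n:ℂ) * I * z) * f z with hF
  have hFper : ∀ z, F (z + 2*π) = F z := by
    intro z
    simp only [hF, hper, mul_add, Complex.exp_add]
    have : Complex.exp (-(n:ℂ) * I * (2*π)) = 1 := by
      rw [show -(n:ℂ) * I * (2*π) = (-n : ℤ) * (2*π*I) by push_cast; ring]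
      exact Complex.exp_int_mul_two_pi_mul_I (-n)
    rw [this, mul_one]
  have hdiff : DifferentiableOn ℂ F (Set.uIcc (0:ℂ).re (2*π + β*I : ℂ).re ×ℂ Set.uIcc (0:ℂ).im (2*π + β*I : ℂ).im) := by
    apply DifferentiableOn.mul
    · exact (Differentiable.differentiableOn (by fun_prop))
    · apply hanal.mono
      intro z hz
      simp only [Complex.mem_reProdIm] at hz
      simp only [Set.mem_setOf_eq]
      have h2 := hz.2
      simp only [Complex.add_im, Complex.ofReal_im, Complex.mul_im, Complex.I_im] at h2
      have : z.im ∈ Set.uIcc (0:ℝ) β := by simpa using h2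
      rcases Set.mem_uIcc.1 this with h | h
      · calc |z.im| ≤ |β| := by rw [abs_le]; constructor <;> [linarith [abs_nonneg β]; exact h.2.trans (le_abs_self β)]
        _ < α := hβ
      · calc |z.im| ≤ |β| := by rw [abs_le]; constructor <;> [linarith [neg_abs_le β]; linarith [abs_nonneg β]]
        _ < α := hβ
  have key := Complex.integral_boundary_rect_eq_zero_of_differentiableOn F 0 (2*π + β*I) hdiff
  have hre : (2*π + β*I : ℂ).re = 2*π := by simp
  have him : (2*π + β*I : ℂ).im = β := by simp
  rw [hre, him, Complex.zero_re, Complex.zero_im] at key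
  have hvert : ∀ y : ℝ, F ((2*π:ℝ) + (y:ℂ)*I) = F ((0:ℝ) + (y:ℂ)*I) := by
    intro y
    rw [show ((2*π:ℝ) + (y:ℂ)*I) = (((0:ℝ):ℂ) + y*I) + 2*π by push_cast; ring, hFper]
  simp only [show ((2*π:ℂ)) = ((2*π:ℝ):ℂ) by push_cast; ring, show ((0:ℂ)) = ((0:ℝ):ℂ) by simp] at key
  simp only [hvert] at key
  rw [add_sub_cancel_right, Complex.ofReal_zero, sub_eq_zero] at key
  calc (∫ x in (0:ℝ)..(2*π), Complex.exp (-(n:ℂ) * I * x) * f x)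
      = ∫ x in (0:ℝ)..(2*π), F (x + (0:ℝ)*I) := by
        refine intervalIntegral.integral_congr fun x _ => ?_
        simp [hF]
    _ = ∫ x in (0:ℝ)..(2*π), F (x + β*I) := key

private lemma trap_coeff_bound (f : ℂ → ℂ) (α M : ℝ) (hα : 0 < α)
    (hper : ∀ z : ℂ, f (z + 2*π) = f z)
    (hanal : DifferentiableOn ℂ f {z : ℂ | |z.im| < α})
    (hbound : ∀ z : ℂ, |z.im| < α → ‖f z‖ ≤ M) (n : ℤ) :
    ‖∫ x in (0:ℝ)..(2*π), Complex.exp (-(n:ℂ) * I * x) * f x‖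
      ≤ 2*π*M*Real.exp (-α*|(n:ℝ)|) := by
  have hstep : ∀ β' ∈ Set.Ioo (0:ℝ) α,
      ‖∫ x in (0:ℝ)..(2*π), Complex.exp (-(n:ℂ) * I * x) * f x‖
        ≤ 2*π*M*Real.exp (-β'*|(n:ℝ)|) := by
    intro β' hβ'
    set β : ℝ := if 0 ≤ n then -β' else β' with hβdef
    have habs : |β| = β' := by
      rcases le_or_gt 0 n with h | h <;> simp [hβdef, h, not_le.2, abs_of_pos hβ'.1]
    have hβα : |β| < α := by rw [habs]; exact hβ'.2
    rw [trap_contour_shift f α hper hanal n β hβα]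
    have hnβ : (n:ℝ) * β = -β' * |(n:ℝ)| := by
      rcases le_or_gt 0 n with h | h
      · have h2 : |(n:ℝ)| = n := abs_of_nonneg (by exact_mod_cast h)
        rw [hβdef, if_pos h, h2]; ring
      · have h2 : |(n:ℝ)| = -n := abs_of_neg (by exact_mod_cast h)
        rw [hβdef, if_neg (not_le.2 h), h2]; ring
    have key : ∀ x ∈ Set.uIoc (0:ℝ) (2*π),
        ‖Complex.exp (-(n:ℂ) * I * (x + β*I)) * f (x + β*I)‖
          ≤ Real.exp (-β'*|(n:ℝ)|) * M := by
      intro x _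
      rw [norm_mul]
      have h1 : ‖Complex.exp (-(n:ℂ) * I * (x + β*I))‖ = Real.exp (-β'*|(n:ℝ)|) := by
        rw [Complex.norm_exp]
        congr 1
        rw [← hnβ]
        simp [Complex.add_re, Complex.mul_re, Complex.mul_im]
      rw [h1]
      refine mul_le_mul_of_nonneg_left ?_ (Real.exp_pos _).le
      refine hbound _ ?_
      simpa using hβα
    calc ‖∫ x in (0:ℝ)..(2*π), Complex.exp (-(n:ℂ) * I * (x + β*I)) * f (x + β*I)‖
        ≤ Real.exp (-β'*|(n:ℝ)|) * M * |2*π - 0| :=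
          intervalIntegral.norm_integral_le_of_norm_le_const key
      _ = 2*π*M*Real.exp (-β'*|(n:ℝ)|) := by
          rw [_root_.abs_of_nonneg (by have := Real.pi_pos; linarith : (0:ℝ) ≤ 2*π - 0)]; ring
  have htend : Filter.Tendsto (fun β' : ℝ => 2*π*M*Real.exp (-β'*|(n:ℝ)|))
      (nhdsWithin α (Set.Iio α)) (nhds (2*π*M*Real.exp (-α*|(n:ℝ)|))) :=
    Filter.Tendsto.mono_left (Continuous.tendsto (by fun_prop) α) nhdsWithin_le_nhds
  refine ge_of_tendsto htend ?_
  filter_upwards [Ioo_mem_nhdsLT_of_mem (Set.mem_Ioc.2 ⟨hα, le_refl α⟩)] with β' hβ'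
  exact hstep β' hβ'

private lemma trap_exp_sum (N : ℕ) (hN : 0 < N) (i : ℤ) :
    ∑ k ∈ Finset.range N, Complex.exp (I * i * (2*π*(k+1)/N))
      = if (N:ℤ) ∣ i then (N:ℂ) else 0 := by
  have hNC : (N:ℂ) ≠ 0 := Nat.cast_ne_zero.2 hN.ne'
  have hterm : ∀ k : ℕ, Complex.exp (I * i * (2*π*(k+1)/N))
      = Complex.exp (2*π*I*i/N) ^ (k+1) := by
    intro k
    rw [← Complex.exp_nat_mul]
    congr 1
    push_cast
    ring
  simp only [hterm]
  by_cases hdvd : (N:ℤ) ∣ i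
  · obtain ⟨m, hm⟩ := hdvd
    have hω : Complex.exp (2*π*I*i/N) = 1 := by
      rw [show (2*π*I*(i:ℂ)/N) = (m:ℤ) * (2*π*I) by
        rw [hm]; push_cast; field_simp]
      exact Complex.exp_int_mul_two_pi_mul_I m
    rw [if_pos ⟨m, hm⟩]
    simp [hω]
  · have hω : Complex.exp (2*π*I*i/N) ≠ 1 := by
      intro h
      rw [Complex.exp_eq_one_iff] at h
      obtain ⟨m, hm⟩ := h
      apply hdvd
      refine ⟨m, ?_⟩
      have h2π : (2*π*I : ℂ) ≠ 0 := by
        simp [Real.pi_ne_zero, Complex.I_ne_zero, Complex.ofReal_ne_zero]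
      rw [div_eq_iff hNC] at hm
      have h4 : (2*π*I) * (i:ℂ) = (2*π*I) * ((N:ℂ)*m) := by linear_combination hm
      have : (i:ℂ) = (N:ℂ) * m := mul_left_cancel₀ h2π h4
      exact_mod_cast this
    have hωN : Complex.exp (2*π*I*i/N) ^ N = 1 := by
      rw [← Complex.exp_nat_mul, show (N:ℂ) * (2*π*I*i/N) = (i:ℤ) * (2*π*I) by
        push_cast; field_simp]
      exact Complex.exp_int_mul_two_pi_mul_I i
    rw [if_neg hdvd]
    have : ∑ k ∈ Finset.range N, Complex.exp (2*π*I*i/N) ^ (k+1)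
        = Complex.exp (2*π*I*i/N) * ∑ k ∈ Finset.range N, Complex.exp (2*π*I*i/N) ^ k := by
      rw [Finset.mul_sum]
      exact Finset.sum_congr rfl fun k _ => by ring
    rw [this, geom_sum_eq hω, hωN]
    simp

theorem trapezoidal_rule_exponential_convergence
    (f : ℂ → ℂ) (α M : ℝ) (hα : 0 < α) (hM : 0 ≤ M)
    (hper : ∀ z : ℂ, f (z + 2*π) = f z)
    (hcont : ∀ α' : ℝ, α' < α → ContinuousOn f {z : ℂ | |z.im| ≤ α'})
    (hanal : DifferentiableOn ℂ f {z : ℂ | |z.im| < α})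
    (hbound : ∀ z : ℂ, |z.im| < α → ‖f z‖ ≤ M)
    (N : ℕ) (hN : 0 < N) :
    ‖(∫ t in (0:ℝ)..(2*π), f t)
        - (2*π/N) * ∑ k ∈ Finset.range N, f (2*π*(k+1)/N)‖
      ≤ 4*π*M / (Real.exp (α*N) - 1) := by
  have hπ : (π:ℂ) ≠ 0 := Complex.ofReal_ne_zero.2 Real.pi_ne_zero
  have hNC : (N:ℂ) ≠ 0 := Nat.cast_ne_zero.2 hN.ne'
  haveI : Fact (0 < 2*π) := ⟨by positivity⟩
  set g : ℝ → ℂ := fun t => f t with hg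
  have hgper : Function.Periodic g (2*π) := by
    intro t; simp only [hg]; push_cast; exact hper t
  have hgcont : Continuous g := by
    have h := hcont (α/2) (by linarith)
    exact h.comp_continuous Complex.continuous_ofReal (fun x => by simp; linarith)
  set G : AddCircle (2*π) → ℂ := hgper.lift with hG
  have hGcont : Continuous G := hgcont.quotient_liftOn' _
  have hGcoe : ∀ x : ℝ, G ↑x = f ↑x := fun x => hgper.lift_coe x
  set GC : C(AddCircle (2*π), ℂ) := ⟨G, hGcont⟩ with hGC
  set c : ℤ → ℂ := fourierCoeff G with hc
  -- Fourier coefficient formula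
  have hcoeff : ∀ n : ℤ, c n
      = (1/(2*π):ℝ) • ∫ x in (0:ℝ)..(2*π), Complex.exp (-(n:ℂ) * I * x) * f x := by
    intro n
    rw [hc, fourierCoeff_eq_intervalIntegral G n 0]
    congr 1
    rw [zero_add]
    refine intervalIntegral.integral_congr fun x _ => ?_
    rw [hGcoe, fourier_coe_apply, smul_eq_mul]
    congr 2
    push_cast
    field_simp
  -- norm bound on coefficients
  have hcb : ∀ n : ℤ, ‖c n‖ ≤ M * Real.exp (-α*|(n:ℝ)|) := by
    intro n
    rw [hcoeff n, norm_smul, Real.norm_eq_abs,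
      _root_.abs_of_nonneg (by positivity : (0:ℝ) ≤ 1/(2*π))]
    calc (1/(2*π)) * ‖∫ x in (0:ℝ)..(2*π), Complex.exp (-(n:ℂ) * I * x) * f x‖
        ≤ (1/(2*π)) * (2*π*M*Real.exp (-α*|(n:ℝ)|)) := by
          refine mul_le_mul_of_nonneg_left ?_ (by positivity)
          exact trap_coeff_bound f α M hα hper hanal hbound n
      _ = M * Real.exp (-α*|(n:ℝ)|) := by
          field_simp
  -- summability
  set r : ℝ := Real.exp (-α) with hr
  have hr0 : 0 ≤ r := (Real.exp_pos _).le
  have hr1 : r < 1 := Real.exp_lt_one_iff.2 (by linarith)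
  have hmaj : Summable (fun n : ℤ => M * Real.exp (-α*|(n:ℝ)|)) := by
    have hnat : Summable (fun j : ℕ => M * r ^ j) :=
      (summable_geometric_of_lt_one hr0 hr1).mul_left M
    refine Summable.of_nat_of_neg ?_ ?_ <;>
    · refine hnat.congr fun j => ?_
      rw [hr, ← Real.exp_nat_mul]
      congr 1
      simp only [Int.cast_natCast, Int.cast_neg, abs_neg, Nat.abs_cast]
      ring
  have hsumm : Summable c := by
    refine Summable.of_norm_bounded hmaj hcb
  -- integral = 2π c 0
  have hint : (∫ t in (0:ℝ)..(2*π), f t) = (2*π:ℂ) * c 0 := by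
    rw [hcoeff 0, Complex.real_smul]
    rw [show ∫ x in (0:ℝ)..(2*π), Complex.exp (-((0:ℤ):ℂ) * I * x) * f x
        = ∫ t in (0:ℝ)..(2*π), f t from intervalIntegral.integral_congr fun x _ => by simp]
    push_cast
    field_simp
  -- pointwise Fourier expansions at the nodes
  have hpt : ∀ k ∈ Finset.range N,
      HasSum (fun i : ℤ => c i * Complex.exp (I * i * (2*π*((k:ℂ)+1)/N))) (f (2*π*((k:ℂ)+1)/N)) := by
    intro k _
    have h0 := has_pointwise_sum_fourier_series_of_summable (f := GC)
      (by exact hsumm) ((2*π*((k:ℝ)+1)/N : ℝ) : AddCircle (2*π))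
    have harg : ((2*π*((k:ℝ)+1)/N : ℝ) : ℂ) = 2*π*((k:ℂ)+1)/N := by push_cast; ring
    have hval : GC ((2*π*((k:ℝ)+1)/N : ℝ) : AddCircle (2*π)) = f (2*π*((k:ℂ)+1)/N) := by
      have h5 := hGcoe (2*π*((k:ℝ)+1)/N)
      rw [harg] at h5
      exact h5
    rw [hval] at h0
    refine h0.congr_fun fun i => ?_
    show c i * _ = fourierCoeff GC i • fourier i _
    rw [smul_eq_mul]
    congr 1
    rw [fourier_coe_apply]
    congr 1
    push_cast
    field_simp
  -- sum over nodes
  have hsum1 : HasSum (fun i : ℤ => c i * (if (N:ℤ) ∣ i then (N:ℂ) else 0))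
      (∑ k ∈ Finset.range N, f (2*π*((k:ℂ)+1)/N)) := by
    have h1 := hasSum_sum hpt
    refine h1.congr_fun fun i => ?_
    rw [← Finset.mul_sum, trap_exp_sum N hN i]
  -- reindex over multiples of N
  have hinj : Function.Injective (fun m : ℤ => m * N) :=
    fun a b h => by
      have hNZ : (N:ℤ) ≠ 0 := Int.natCast_ne_zero.2 hN.ne'
      exact mul_right_cancel₀ hNZ h
  have hsupp : ∀ i ∉ Set.range (fun m : ℤ => m * N),
      c i * (if (N:ℤ) ∣ i then (N:ℂ) else 0) = 0 := by
    intro i hi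
    rw [if_neg, mul_zero]
    rintro ⟨m, hm⟩
    exact hi ⟨m, by show m*(N:ℤ) = i; rw [hm, mul_comm]⟩
  have hsum2 : HasSum (fun m : ℤ => c (m * N) * N)
      (∑ k ∈ Finset.range N, f (2*π*((k:ℂ)+1)/N)) := by
    have h6 := (hinj.hasSum_iff hsupp).2 hsum1
    refine h6.congr_fun fun m => ?_
    show c (m*N) * (N:ℂ) = c (m*N) * (if (N:ℤ) ∣ m*N then (N:ℂ) else 0)
    rw [if_pos (dvd_mul_left _ _)]
  set S : ℂ := ∑ k ∈ Finset.range N, f (2*π*((k:ℂ)+1)/N) with hS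
  have hsum3 : HasSum (fun m : ℤ => c (m * N)) (S / N) := by
    have := hsum2.div_const (N:ℂ)
    refine this.congr_fun fun m => ?_
    field_simp
  -- the deviation series
  set t : ℂ := S / N with ht
  have hd : HasSum (fun m : ℤ => if m = 0 then 0 else c (m * N)) (t - c 0) := by
    have h2 : HasSum (fun m : ℤ => if m = 0 then c 0 else 0) (c 0) := hasSum_ite_eq 0 (c 0)
    refine (hsum3.sub h2).congr_fun fun m => ?_
    by_cases hm : m = 0
    · simp [hm]
    · simp [hm]
  -- geometric majorant for the deviation
  set q : ℝ := α * N with hq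
  have hq0 : 0 < q := by
    have : (1:ℝ) ≤ (N:ℝ) := by exact_mod_cast hN
    rw [hq]; positivity
  set ρ : ℝ := Real.exp (-q) with hρ
  have hρ0 : 0 ≤ ρ := (Real.exp_pos _).le
  have hρ0' : 0 < ρ := Real.exp_pos _
  have hρ1 : ρ < 1 := Real.exp_lt_one_iff.2 (by linarith)
  set b : ℤ → ℝ := fun m => if m = 0 then 0 else M * ρ ^ m.natAbs with hb
  have hbd : ∀ m : ℤ, ‖if m = 0 then (0:ℂ) else c (m * N)‖ ≤ b m := by
    intro m
    by_cases hm : m = 0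
    · simp [hm, hb]
    · rw [if_neg hm, hb]
      simp only [if_neg hm]
      refine (hcb (m*N)).trans ?_
      refine mul_le_mul_of_nonneg_left (le_of_eq ?_) hM
      rw [hρ, ← Real.exp_nat_mul]
      congr 1
      rw [hq]
      push_cast
      rw [abs_mul, Nat.cast_natAbs]
      simp [Nat.abs_cast]
      ring
  have hbsum : HasSum b (M*(1-ρ)⁻¹ - M + M*ρ*(1-ρ)⁻¹) := by
    refine HasSum.of_nat_of_neg_add_one ?_ ?_
    · have h1 : HasSum (fun j : ℕ => M * ρ ^ j) (M * (1-ρ)⁻¹) :=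
        (hasSum_geometric_of_lt_one hρ0 hρ1).mul_left M
      have h2 : HasSum (fun j : ℕ => if j = 0 then M else 0) M := hasSum_ite_eq 0 M
      refine (h1.sub h2).congr_fun fun j => ?_
      by_cases hj : j = 0
      · simp [hj, hb]
      · rw [hb]
        simp only [Int.natCast_eq_zero, hj, if_neg, Int.natAbs_natCast]
        simp [hj]
    · have h1 : HasSum (fun j : ℕ => M * ρ * ρ ^ j) (M * ρ * (1-ρ)⁻¹) :=
        (hasSum_geometric_of_lt_one hρ0 hρ1).mul_left (M * ρ)
      refine h1.congr_fun fun j => ?_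
      simp only [hb]
      have hne : -((j:ℤ)+1) ≠ 0 := by omega
      rw [if_neg hne]
      have hna : (-((j:ℤ)+1)).natAbs = j + 1 := by omega
      rw [hna, pow_succ]
      ring
  have hdsumm : Summable (fun m : ℤ => ‖if m = 0 then (0:ℂ) else c (m * N)‖) :=
    Summable.of_nonneg_of_le (fun _ => norm_nonneg _) hbd hbsum.summable
  have hdev : ‖t - c 0‖ ≤ M*(1-ρ)⁻¹ - M + M*ρ*(1-ρ)⁻¹ := by
    rw [← hd.tsum_eq]
    refine (norm_tsum_le_tsum_norm hdsumm).trans ?_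
    rw [← hbsum.tsum_eq]
    exact Summable.tsum_le_tsum hbd hdsumm hbsum.summable
  -- final computation
  have hgoal : (∫ x in (0:ℝ)..(2*π), f x) - (2*π/N) * S = -(2*π) * (t - c 0) := by
    rw [hint, ht]
    field_simp
    ring
  rw [hS] at hgoal ⊢
  rw [hgoal, norm_mul]
  have hnorm2π : ‖(-(2*π) : ℂ)‖ = 2*π := by
    rw [norm_neg]
    rw [show ((2*π : ℂ)) = ((2*π:ℝ):ℂ) by push_cast; ring, Complex.norm_real,
      Real.norm_eq_abs, _root_.abs_of_nonneg (by positivity)]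
  rw [hnorm2π]
  have hfinal : 2*π*(M*(1-ρ)⁻¹ - M + M*ρ*(1-ρ)⁻¹) = 4*π*M / (Real.exp (α*N) - 1) := by
    have hexp : Real.exp (α*N) = ρ⁻¹ := by
      rw [hρ, hq, Real.exp_neg, inv_inv]
    rw [hexp]
    have h1ρ : (1:ℝ) - ρ ≠ 0 := by linarith
    have hρinv : ρ⁻¹ - 1 ≠ 0 := by
      have : 1 < ρ⁻¹ := (one_lt_inv₀ hρ0').mpr hρ1
      linarith
    field_simp
    ring
  rw [← hfinal]
  exact mul_le_mul_of_nonneg_left hdev (by positivity)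
end
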